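/- Under the stated assumptions, the relaxation step does not increase the total spatial variation summed over the lanes: if ρ : ℝ → ∏_{j=1}^M [0,R_j] is a function each of whose components ρ_j has finite total variation over ℝ (total variation being the supremum of ∑_k |ρ_j(x_{k+1}) − ρ_j(x_k)| over all finite increasing sequences x_1 < … < x_n), then ∑_{j=1}^M TV(x ↦ T_j(ρ(x))) ≤ ∑_{j=1}^M TV(ρ_j). (Total-variation bound for the source splitting step established in the proof of Lemma 2.4.) -/

import Mathlib

open Set

private lemma chain_sum_le {E : Type*} [PseudoEMetricSpace E] (w : ℕ → E) (φ : ℕ → ℕ)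
    (hφ : Monotone φ) (n N : ℕ) (hN : φ n ≤ N) :
    ∑ i ∈ Finset.range n, edist (w (φ (i+1))) (w (φ i)) ≤
      ∑ k ∈ Finset.range N, edist (w (k+1)) (w k) := by
  calc ∑ i ∈ Finset.range n, edist (w (φ (i+1))) (w (φ i))
      ≤ ∑ i ∈ Finset.range n, ∑ k ∈ Finset.Ico (φ i) (φ (i+1)), edist (w (k+1)) (w k) := by
        refine Finset.sum_le_sum fun i _ => ?_
        rw [edist_comm]
        calc edist (w (φ i)) (w (φ (i+1)))
            ≤ ∑ k ∈ Finset.Ico (φ i) (φ (i+1)), edist (w k) (w (k+1)) :=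
              edist_le_Ico_sum_edist w (hφ (Nat.le_succ i))
          _ = _ := Finset.sum_congr rfl fun k _ => edist_comm _ _
    _ = ∑ k ∈ Finset.Ico (φ 0) (φ n), edist (w (k+1)) (w k) := by
        induction n with
        | zero => simp
        | succ n ih =>
          rw [Finset.sum_range_succ, ih (le_trans (hφ (Nat.le_succ n)) hN)]
          exact Finset.sum_Ico_consecutive _ (hφ (Nat.zero_le n)) (hφ (Nat.le_succ n))
    _ ≤ _ := by
        refine Finset.sum_le_sum_of_subset fun k hk => ?_
        simp only [Finset.mem_Ico, Finset.mem_range] at *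
        omega

private lemma exists_refine (u v : ℕ → ℝ) (hu : Monotone u) (hv : Monotone v) (n m : ℕ) :
    ∃ (w : ℕ → ℝ) (N : ℕ), Monotone w ∧
      ∀ f : ℝ → ℝ,
        (∑ i ∈ Finset.range n, edist (f (u (i+1))) (f (u i)) ≤
          ∑ k ∈ Finset.range N, edist (f (w (k+1))) (f (w k))) ∧
        (∑ i ∈ Finset.range m, edist (f (v (i+1))) (f (v i)) ≤
          ∑ k ∈ Finset.range N, edist (f (w (k+1))) (f (w k))) := by
  classical
  set u' : ℕ → ℝ := fun i => u (min i n) with hu'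
  set v' : ℕ → ℝ := fun i => v (min i m) with hv'
  have hu'm : Monotone u' := hu.comp (fun a b hab => min_le_min hab le_rfl)
  have hv'm : Monotone v' := hv.comp (fun a b hab => min_le_min hab le_rfl)
  set A : Finset ℝ :=
    ((Finset.range (n+1)).image u) ∪ ((Finset.range (m+1)).image v) with hA
  have hcard : 0 < A.card := by
    refine Finset.card_pos.2 ⟨u 0, ?_⟩
    simp [hA]
    exact Or.inl ⟨0, by omega, rfl⟩
  have humem : ∀ i, u' i ∈ A := fun i => by
    simp only [hA, Finset.mem_union, Finset.mem_image]
    exact Or.inl ⟨min i n, Finset.mem_range.2 (by omega), rfl⟩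
  have hvmem : ∀ i, v' i ∈ A := fun i => by
    simp only [hA, Finset.mem_union, Finset.mem_image]
    exact Or.inr ⟨min i m, Finset.mem_range.2 (by omega), rfl⟩
  set N := A.card with hN
  set e := A.orderIsoOfFin (rfl : A.card = N) with he
  set w : ℕ → ℝ := fun k => (e ⟨min k (N-1), by omega⟩ : ℝ) with hw
  have hwm : Monotone w := by
    intro i j hij
    have : (⟨min i (N-1), by omega⟩ : Fin N) ≤ ⟨min j (N-1), by omega⟩ := by
      simp [Fin.le_def]
      omega
    exact Subtype.coe_le_coe.2 (e.monotone this)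
  -- generic sub-claim
  have main : ∀ (z : ℕ → ℝ), Monotone z → (∀ i, z i ∈ A) → ∀ (p : ℕ) (f : ℝ → ℝ),
      ∑ i ∈ Finset.range p, edist (f (z (i+1))) (f (z i)) ≤
        ∑ k ∈ Finset.range (N-1), edist (f (w (k+1))) (f (w k)) := by
    intro z hz hzmem p f
    set φ : ℕ → ℕ := fun i => ((e.symm ⟨z i, hzmem i⟩ : Fin N) : ℕ) with hφdef
    have hφ : Monotone φ := by
      intro i j hij
      exact Fin.le_def.1 (e.symm.monotone (Subtype.coe_le_coe.1 (by simpa using hz hij)))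
    have hwFin : ∀ j : Fin N, w (j : ℕ) = e j := by
      intro j
      have hj : (j : ℕ) ⊓ (N-1) = j := by have := j.2; omega
      simp only [hw]
      exact congrArg (fun x : Fin N => ((e x : ℝ))) (Fin.ext hj)
    have hwφ : ∀ i, w (φ i) = z i := by
      intro i
      have := hwFin (e.symm ⟨z i, hzmem i⟩)
      simp only [OrderIso.apply_symm_apply] at this
      exact this
    have hφN : φ p ≤ N - 1 := by
      have : φ p < N := (e.symm ⟨z p, hzmem p⟩).2
      omega
    calc ∑ i ∈ Finset.range p, edist (f (z (i+1))) (f (z i))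
        = ∑ i ∈ Finset.range p, edist ((f ∘ w) (φ (i+1))) ((f ∘ w) (φ i)) := by
          refine Finset.sum_congr rfl fun i _ => by simp [Function.comp, hwφ]
      _ ≤ _ := chain_sum_le (f ∘ w) φ hφ p (N-1) hφN
  refine ⟨w, N-1, hwm, fun f => ⟨?_, ?_⟩⟩
  · calc ∑ i ∈ Finset.range n, edist (f (u (i+1))) (f (u i))
        = ∑ i ∈ Finset.range n, edist (f (u' (i+1))) (f (u' i)) := by
          refine Finset.sum_congr rfl fun i hi => ?_
          have hi' := Finset.mem_range.1 hi
          simp only [hu']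
          rw [min_eq_left (by omega), min_eq_left (by omega)]
      _ ≤ _ := main u' hu'm humem n f
  · calc ∑ i ∈ Finset.range m, edist (f (v (i+1))) (f (v i))
        = ∑ i ∈ Finset.range m, edist (f (v' (i+1))) (f (v' i)) := by
          refine Finset.sum_congr rfl fun i hi => ?_
          have hi' := Finset.mem_range.1 hi
          simp only [hv']
          rw [min_eq_left (by omega), min_eq_left (by omega)]
      _ ≤ _ := main v' hv'm hvmem m f

private lemma sum_iSup_le {ι : Type*} (J : Finset ℕ) (V : ℕ → ι → ENNReal) (B : ENNReal)
    (hdir : ∀ p q : ι, ∃ r, ∀ j, V j p ≤ V j r ∧ V j q ≤ V j r)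
    (hB : ∀ p, ∑ j ∈ J, V j p ≤ B) :
    ∑ j ∈ J, ⨆ p, V j p ≤ B := by
  have key : ∀ J' : Finset ℕ, ∑ j ∈ J', ⨆ p, V j p ≤ ⨆ p, ∑ j ∈ J', V j p := by
    intro J'
    induction J' using Finset.induction_on with
    | empty => simp
    | insert _ _ ha ih =>
      rename_i c s
      rw [Finset.sum_insert ha]
      have h1 : (⨆ p, V c p) + ⨆ p, ∑ j ∈ s, V j p = ⨆ p, (V c p + ∑ j ∈ s, V j p) := by
        refine ENNReal.iSup_add_iSup fun p q => ?_
        obtain ⟨r, hr⟩ := hdir p q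
        exact ⟨r, add_le_add (hr c).1 (Finset.sum_le_sum fun j _ => (hr j).2)⟩
      calc (⨆ p, V c p) + ∑ j ∈ s, ⨆ p, V j p
          ≤ (⨆ p, V c p) + ⨆ p, ∑ j ∈ s, V j p := add_le_add le_rfl ih
        _ = ⨆ p, (V c p + ∑ j ∈ s, V j p) := h1
        _ = ⨆ p, ∑ j ∈ insert c s, V j p := by
            refine iSup_congr fun p => ?_
            rw [Finset.sum_insert ha]
  exact (key J).trans (iSup_le hB)

private lemma abs_sum_bound (N : ℕ) (lam 𝒮 : ℝ) (a b d : ℕ → ℝ)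
    (ha : ∀ i, 0 ≤ a i ∧ a i ≤ 𝒮) (hb : ∀ i, -𝒮 ≤ b i ∧ b i ≤ 0)
    (ha0 : a 0 = 0) (haN : a N = 0) (hb0 : b 0 = 0) (hbN : b N = 0)
    (hlam : 0 ≤ lam) (hlamS : lam * 𝒮 ≤ 1/2) :
    ∑ i ∈ Finset.range N,
      |d (i+1) + lam * ((a i * d i + b i * d (i+1)) - (a (i+1) * d (i+1) + b (i+1) * d (i+2)))|
      ≤ ∑ i ∈ Finset.range N, |d (i+1)| := by
  have hcoef : ∀ i, 0 ≤ 1 + lam * b i - lam * a (i+1) := by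
    intro i
    have h1 : lam * a (i+1) ≤ lam * 𝒮 := mul_le_mul_of_nonneg_left (ha (i+1)).2 hlam
    have h2 : lam * (-b i) ≤ lam * 𝒮 := mul_le_mul_of_nonneg_left (by linarith [(hb i).1]) hlam
    nlinarith
  have hterm : ∀ i,
      |d (i+1) + lam * ((a i * d i + b i * d (i+1)) - (a (i+1) * d (i+1) + b (i+1) * d (i+2)))|
      ≤ (1 + lam * b i - lam * a (i+1)) * |d (i+1)| + (lam * a i) * |d i|
        + (lam * (-(b (i+1)))) * |d (i+2)| := by
    intro i
    have hrw : d (i+1) + lam * ((a i * d i + b i * d (i+1)) - (a (i+1) * d (i+1) + b (i+1) * d (i+2)))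
        = (1 + lam * b i - lam * a (i+1)) * d (i+1) + (lam * a i) * d i
          + (lam * (-(b (i+1)))) * d (i+2) := by ring
    rw [hrw]
    calc |(1 + lam * b i - lam * a (i+1)) * d (i+1) + (lam * a i) * d i
          + (lam * (-(b (i+1)))) * d (i+2)|
        ≤ |(1 + lam * b i - lam * a (i+1)) * d (i+1)| + |(lam * a i) * d i|
          + |(lam * (-(b (i+1)))) * d (i+2)| := abs_add_three _ _ _
      _ = (1 + lam * b i - lam * a (i+1)) * |d (i+1)| + (lam * a i) * |d i|
          + (lam * (-(b (i+1)))) * |d (i+2)| := by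
          simp only [abs_mul, abs_of_nonneg (hcoef i), abs_of_nonneg hlam,
            abs_of_nonneg (ha i).1,
            abs_of_nonneg (show (0:ℝ) ≤ -(b (i+1)) by linarith [(hb (i+1)).2])]
  calc ∑ i ∈ Finset.range N,
        |d (i+1) + lam * ((a i * d i + b i * d (i+1)) - (a (i+1) * d (i+1) + b (i+1) * d (i+2)))|
      ≤ ∑ i ∈ Finset.range N,
        ((1 + lam * b i - lam * a (i+1)) * |d (i+1)| + (lam * a i) * |d i|
          + (lam * (-(b (i+1)))) * |d (i+2)|) := Finset.sum_le_sum fun i _ => hterm i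
    _ = ∑ i ∈ Finset.range N, |d (i+1)| := by
        have e1 : ∑ i ∈ Finset.range N, (lam * a i) * |d i|
            = ∑ i ∈ Finset.range N, (lam * a (i+1)) * |d (i+1)| := by
          have h1 := Finset.sum_range_succ (fun i => (lam * a i) * |d i|) N
          have h2 := Finset.sum_range_succ' (fun i => (lam * a i) * |d i|) N
          simp only [ha0, haN] at h1 h2
          simp only [mul_zero, zero_mul, add_zero] at h1 h2
          rw [← h1, h2]
        have e2 : ∑ i ∈ Finset.range N, (lam * (-(b (i+1)))) * |d (i+2)|
            = ∑ i ∈ Finset.range N, (lam * (-(b i))) * |d (i+1)| := by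
          have h1 := Finset.sum_range_succ (fun i => (lam * (-(b i))) * |d (i+1)|) N
          have h2 := Finset.sum_range_succ' (fun i => (lam * (-(b i))) * |d (i+1)|) N
          simp only [hb0, hbN] at h1 h2
          simp only [neg_zero, mul_zero, zero_mul, add_zero] at h1 h2
          rw [← h2, h1]
        rw [Finset.sum_add_distrib, Finset.sum_add_distrib, e1, e2,
          ← Finset.sum_add_distrib, ← Finset.sum_add_distrib]
        refine Finset.sum_congr rfl fun i _ => by ring

private lemma mvt_box (F : ℝ → ℝ → ℝ) (hF : ContDiff ℝ 1 (Function.uncurry F))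
    (r1 r2 : ℝ) (p1 p2 q1 q2 : ℝ)
    (hp1 : p1 ∈ Icc (0:ℝ) r1) (hp2 : p2 ∈ Icc (0:ℝ) r2)
    (hq1 : q1 ∈ Icc (0:ℝ) r1) (hq2 : q2 ∈ Icc (0:ℝ) r2) :
    ∃ z1 z2, z1 ∈ Icc (0:ℝ) r1 ∧ z2 ∈ Icc (0:ℝ) r2 ∧
      F p1 p2 - F q1 q2 =
        (deriv (fun u => F u z2) z1) * (p1 - q1) + (deriv (fun w => F z1 w) z2) * (p2 - q2) := by
  have hdF : Differentiable ℝ (Function.uncurry F) := hF.differentiable one_ne_zero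
  set γ : ℝ → ℝ × ℝ := fun t => (q1 + t * (p1 - q1), q2 + t * (p2 - q2)) with hγ
  have hγd : ∀ t, HasDerivAt γ (p1 - q1, p2 - q2) t := by
    intro t
    exact ((hasDerivAt_mul_const (p1 - q1)).const_add q1).prodMk
      ((hasDerivAt_mul_const (p2 - q2)).const_add q2)
  set φ : ℝ → ℝ := fun t => Function.uncurry F (γ t) with hφ
  set φ' : ℝ → ℝ := fun t => (fderiv ℝ (Function.uncurry F) (γ t)) (p1 - q1, p2 - q2) with hφ'
  have hφd : ∀ t, HasDerivAt φ (φ' t) t := by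
    intro t
    exact ((hdF (γ t)).hasFDerivAt).comp_hasDerivAt t (hγd t)
  have hcont : ContinuousOn φ (Icc 0 1) := (fun t _ => ((hφd t).continuousAt).continuousWithinAt)
  obtain ⟨c, hc, hceq⟩ := exists_hasDerivAt_eq_slope φ φ' one_pos hcont
    (fun t _ => hφd t)
  have hφ1 : φ 1 = F p1 p2 := by
    simp only [hφ, hγ, Function.uncurry]
    norm_num
  have hφ0 : φ 0 = F q1 q2 := by
    simp only [hφ, hγ, Function.uncurry]
    norm_num
  set z1 := q1 + c * (p1 - q1) with hz1
  set z2 := q2 + c * (p2 - q2) with hz2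
  have hc01 : 0 ≤ c ∧ c ≤ 1 := ⟨le_of_lt hc.1, le_of_lt hc.2⟩
  have hz1m : z1 ∈ Icc (0:ℝ) r1 := by
    have := (convex_Icc (0:ℝ) r1) hq1 hp1 (by linarith [hc01.2] : (0:ℝ) ≤ 1 - c)
      hc01.1 (by ring)
    simpa [smul_eq_mul, show (1-c)*q1 + c*p1 = q1 + c*(p1-q1) by ring] using this
  have hz2m : z2 ∈ Icc (0:ℝ) r2 := by
    have := (convex_Icc (0:ℝ) r2) hq2 hp2 (by linarith [hc01.2] : (0:ℝ) ≤ 1 - c)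
      hc01.1 (by ring)
    simpa [smul_eq_mul, show (1-c)*q2 + c*p2 = q2 + c*(p2-q2) by ring] using this
  refine ⟨z1, z2, hz1m, hz2m, ?_⟩
  set L := fderiv ℝ (Function.uncurry F) (γ c) with hL
  have hγc : γ c = (z1, z2) := rfl
  have hd1 : HasDerivAt (fun u => F u z2) (L (1, 0)) z1 := by
    have hin : HasDerivAt (fun u : ℝ => (u, z2)) ((1:ℝ), (0:ℝ)) z1 :=
      (hasDerivAt_id z1).prodMk (hasDerivAt_const z1 z2)
    have hFd : HasFDerivAt (Function.uncurry F) L (z1, z2) := by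
      rw [hL, hγc]; exact (hdF (z1, z2)).hasFDerivAt
    exact hFd.comp_hasDerivAt z1 hin
  have hd2 : HasDerivAt (fun w => F z1 w) (L (0, 1)) z2 := by
    have hin : HasDerivAt (fun w : ℝ => (z1, w)) ((0:ℝ), (1:ℝ)) z2 :=
      (hasDerivAt_const z2 z1).prodMk (hasDerivAt_id z2)
    have hFd : HasFDerivAt (Function.uncurry F) L (z1, z2) := by
      rw [hL, hγc]; exact (hdF (z1, z2)).hasFDerivAt
    exact hFd.comp_hasDerivAt z2 hin
  have hdecomp : L (p1 - q1, p2 - q2) = (p1 - q1) * L (1, 0) + (p2 - q2) * L (0, 1) := by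
    have : ((p1 - q1, p2 - q2) : ℝ × ℝ) = (p1 - q1) • ((1:ℝ), (0:ℝ)) + (p2 - q2) • ((0:ℝ), (1:ℝ)) := by
      simp [Prod.ext_iff]
    rw [this, map_add, map_smul, map_smul, smul_eq_mul, smul_eq_mul]
  have hslope : φ' c = F p1 p2 - F q1 q2 := by
    rw [hceq, hφ1, hφ0]; norm_num
  rw [hd1.deriv, hd2.deriv, ← hslope]
  simp only [hφ', ← hL]
  rw [hdecomp]
  ring

private lemma sum_Icc_one {β : Type*} [AddCommMonoid β] (M : ℕ) (f : ℕ → β) :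
    ∑ j ∈ Finset.Icc 1 M, f j = ∑ i ∈ Finset.range M, f (i+1) := by
  rw [← Finset.Ico_add_one_right_eq_Icc, Finset.sum_Ico_eq_sum_range]
  simp [add_comm]
/-- Total-variation bound for the source splitting step (proof of Lemma 2.4):
the relaxation step does not increase the total spatial variation summed over
the lanes. -/
theorem relaxation_step_TV_bound
(M : ℕ) (hM : 1 ≤ M)
    (R : ℕ → ℝ) (hR : ∀ j, 1 ≤ j → j ≤ M → 0 < R j)
    (𝒮 τ Δt : ℝ) (h𝒮 : 0 < 𝒮) (hτ : 0 < τ) (hΔt : 0 < Δt)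
    (hΔtτ : Δt ≤ τ / (2 * 𝒮))
    (S : ℕ → ℝ → ℝ → ℝ)
    (hS0 : ∀ u w, S 0 u w = 0)
    (hSM : ∀ u w, S M u w = 0)
    (hSC1 : ∀ j, 1 ≤ j → j ≤ M - 1 → ContDiff ℝ 1 (Function.uncurry (S j)))
    (hS1 : ∀ j, 1 ≤ j → j ≤ M - 1 → ∀ u ∈ Icc (0:ℝ) (R j), ∀ w ∈ Icc (0:ℝ) (R (j+1)),
      deriv (fun u' => S j u' w) u ∈ Icc (0:ℝ) 𝒮)
    (hS2 : ∀ j, 1 ≤ j → j ≤ M - 1 → ∀ u ∈ Icc (0:ℝ) (R j), ∀ w ∈ Icc (0:ℝ) (R (j+1)),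
      deriv (fun w' => S j u w') w ∈ Icc (-𝒮) (0:ℝ))
    (hS00 : ∀ j, 1 ≤ j → j ≤ M - 1 → S j 0 0 = 0)
    (hSRR : ∀ j, 1 ≤ j → j ≤ M - 1 → S j (R j) (R (j+1)) = 0)
    (g : (ℕ → ℝ) → ℕ → ℝ)
    (hg : ∀ ρ j, g ρ j = S (j-1) (ρ (j-1)) (ρ j) - S j (ρ j) (ρ (j+1)))
    (T : (ℕ → ℝ) → ℕ → ℝ)
    (hT : ∀ ρ j, T ρ j = ρ j + (Δt / τ) * g ρ j)
    (ρ : ℝ → ℕ → ℝ)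
    (hρbox : ∀ x, ∀ j, 1 ≤ j → j ≤ M → ρ x j ∈ Icc (0:ℝ) (R j))
    (hBV : ∀ j, 1 ≤ j → j ≤ M → BoundedVariationOn (fun x => ρ x j) univ) :
    ∑ j ∈ Finset.Icc 1 M, eVariationOn (fun x => T (ρ x) j) univ
      ≤ ∑ j ∈ Finset.Icc 1 M, eVariationOn (fun x => ρ x j) univ := by
  classical
  have hlam : 0 ≤ Δt / τ := le_of_lt (div_pos hΔt hτ)
  have hlamS : (Δt / τ) * 𝒮 ≤ 1/2 := by
    rw [div_mul_eq_mul_div, div_le_iff₀ hτ]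
    have h1 : Δt * (2*𝒮) ≤ τ := by
      rw [← le_div_iff₀ (by positivity)]; exact hΔtτ
    nlinarith
  -- pointwise key estimate
  have key : ∀ x y : ℝ, ∑ i ∈ Finset.range M, |T (ρ x) (i+1) - T (ρ y) (i+1)|
      ≤ ∑ i ∈ Finset.range M, |ρ x (i+1) - ρ y (i+1)| := by
    intro x y
    have hex : ∀ j : ℕ, ∃ AB : ℝ × ℝ, (0 ≤ AB.1 ∧ AB.1 ≤ 𝒮) ∧ (-𝒮 ≤ AB.2 ∧ AB.2 ≤ 0) ∧
        (¬(1 ≤ j ∧ j ≤ M - 1) → AB.1 = 0 ∧ AB.2 = 0) ∧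
        (j ≤ M → S j (ρ x j) (ρ x (j+1)) - S j (ρ y j) (ρ y (j+1)) =
          AB.1 * (ρ x j - ρ y j) + AB.2 * (ρ x (j+1) - ρ y (j+1))) := by
      intro j
      by_cases hj : 1 ≤ j ∧ j ≤ M - 1
      · have hjM : j ≤ M := le_trans hj.2 (Nat.sub_le M 1)
        have hj1M : j + 1 ≤ M := by omega
        obtain ⟨z1, z2, hz1, hz2, heq⟩ := mvt_box (S j) (hSC1 j hj.1 hj.2) (R j) (R (j+1))
          (ρ x j) (ρ x (j+1)) (ρ y j) (ρ y (j+1))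
          (hρbox x j hj.1 hjM) (hρbox x (j+1) (by omega) hj1M)
          (hρbox y j hj.1 hjM) (hρbox y (j+1) (by omega) hj1M)
        have hA := hS1 j hj.1 hj.2 z1 hz1 z2 hz2
        have hB := hS2 j hj.1 hj.2 z1 hz1 z2 hz2
        exact ⟨(deriv (fun u => S j u z2) z1, deriv (fun w => S j z1 w) z2),
          ⟨hA.1, hA.2⟩, ⟨hB.1, hB.2⟩, fun h => absurd hj h, fun _ => heq⟩
      · refine ⟨(0, 0), ⟨le_rfl, le_of_lt h𝒮⟩, ⟨show -𝒮 ≤ (0:ℝ) from neg_nonpos.mpr h𝒮.le, le_rfl⟩, fun _ => ⟨rfl, rfl⟩,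
          fun hjM => ?_⟩
        have hcase : j = 0 ∨ j = M := by omega
        rcases hcase with rfl | rfl
        · simp [hS0]
        · simp [hSM]
    choose AB hab1 hab2 hab0 habS using hex
    have hId : ∀ i ∈ Finset.range M,
        T (ρ x) (i+1) - T (ρ y) (i+1) =
          (ρ x (i+1) - ρ y (i+1)) + (Δt/τ) *
            (((AB i).1 * (ρ x i - ρ y i) + (AB i).2 * (ρ x (i+1) - ρ y (i+1)))
            - ((AB (i+1)).1 * (ρ x (i+1) - ρ y (i+1)) + (AB (i+1)).2 * (ρ x (i+2) - ρ y (i+2)))) := by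
      intro i hi
      have hi' : i < M := Finset.mem_range.1 hi
      have h1 := habS i (by omega)
      have h2 := habS (i+1) (by omega)
      rw [hT, hT, hg, hg]
      simp only [Nat.add_sub_cancel]
      linear_combination (Δt/τ) * h1 - (Δt/τ) * h2
    calc ∑ i ∈ Finset.range M, |T (ρ x) (i+1) - T (ρ y) (i+1)|
        = ∑ i ∈ Finset.range M, |(ρ x (i+1) - ρ y (i+1)) + (Δt/τ) *
            (((AB i).1 * (ρ x i - ρ y i) + (AB i).2 * (ρ x (i+1) - ρ y (i+1)))
            - ((AB (i+1)).1 * (ρ x (i+1) - ρ y (i+1)) + (AB (i+1)).2 * (ρ x (i+2) - ρ y (i+2))))| :=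
          Finset.sum_congr rfl fun i hi => by rw [hId i hi]
      _ ≤ _ := abs_sum_bound M (Δt/τ) 𝒮 (fun j => (AB j).1) (fun j => (AB j).2)
          (fun n => ρ x n - ρ y n) hab1 hab2
          (hab0 0 (by omega)).1 (hab0 M (by omega)).1 (hab0 0 (by omega)).2 (hab0 M (by omega)).2
          hlam hlamS
  -- from pointwise to variations
  set B := ∑ j ∈ Finset.Icc 1 M, eVariationOn (fun x => ρ x j) univ with hB
  show ∑ j ∈ Finset.Icc 1 M, eVariationOn (fun x => T (ρ x) j) univ ≤ B
  have := sum_iSup_le (ι := ℕ × {u : ℕ → ℝ // Monotone u ∧ ∀ i, u i ∈ (univ : Set ℝ)})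
    (Finset.Icc 1 M)
    (fun j p => ∑ i ∈ Finset.range p.1, edist (T (ρ (p.2.1 (i+1))) j) (T (ρ (p.2.1 i)) j)) B
    ?_ ?_
  · exact this
  · -- directedness via common refinement
    intro p q
    obtain ⟨w, N, hwm, hwf⟩ := exists_refine p.2.1 q.2.1 p.2.2.1 q.2.2.1 p.1 q.1
    refine ⟨(N, ⟨w, hwm, fun _ => mem_univ _⟩), fun j => ?_⟩
    exact ⟨(hwf (fun z => T (ρ z) j)).1, (hwf (fun z => T (ρ z) j)).2⟩
  · -- bound for a fixed partition
    intro p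
    calc ∑ j ∈ Finset.Icc 1 M, ∑ i ∈ Finset.range p.1,
            edist (T (ρ (p.2.1 (i+1))) j) (T (ρ (p.2.1 i)) j)
        = ∑ i ∈ Finset.range p.1, ∑ j ∈ Finset.Icc 1 M,
            edist (T (ρ (p.2.1 (i+1))) j) (T (ρ (p.2.1 i)) j) := Finset.sum_comm
      _ ≤ ∑ i ∈ Finset.range p.1, ∑ j ∈ Finset.Icc 1 M,
            edist (ρ (p.2.1 (i+1)) j) (ρ (p.2.1 i) j) := by
          refine Finset.sum_le_sum fun i _ => ?_
          calc ∑ j ∈ Finset.Icc 1 M, edist (T (ρ (p.2.1 (i+1))) j) (T (ρ (p.2.1 i)) j)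
              = ENNReal.ofReal
                  (∑ j ∈ Finset.Icc 1 M, |T (ρ (p.2.1 (i+1))) j - T (ρ (p.2.1 i)) j|) := by
                rw [ENNReal.ofReal_sum_of_nonneg (fun j _ => abs_nonneg _)]
                refine Finset.sum_congr rfl fun j _ => ?_
                rw [edist_dist, Real.dist_eq]
            _ ≤ ENNReal.ofReal
                  (∑ j ∈ Finset.Icc 1 M, |ρ (p.2.1 (i+1)) j - ρ (p.2.1 i) j|) := by
                apply ENNReal.ofReal_le_ofReal
                rw [sum_Icc_one M (fun j => |T (ρ (p.2.1 (i+1))) j - T (ρ (p.2.1 i)) j|),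
                  sum_Icc_one M (fun j => |ρ (p.2.1 (i+1)) j - ρ (p.2.1 i) j|)]
                exact key (p.2.1 (i+1)) (p.2.1 i)
            _ = ∑ j ∈ Finset.Icc 1 M, edist (ρ (p.2.1 (i+1)) j) (ρ (p.2.1 i) j) := by
                rw [ENNReal.ofReal_sum_of_nonneg (fun j _ => abs_nonneg _)]
                refine Finset.sum_congr rfl fun j _ => ?_
                rw [edist_dist, Real.dist_eq]
      _ = ∑ j ∈ Finset.Icc 1 M, ∑ i ∈ Finset.range p.1,
            edist (ρ (p.2.1 (i+1)) j) (ρ (p.2.1 i) j) := Finset.sum_comm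
      _ ≤ B := by
          refine Finset.sum_le_sum fun j _ => ?_
          exact eVariationOn.sum_le (f := fun x => ρ x j) (n := p.1) p.2.2.1 p.2.2.2
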